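/- Let z : [0, s₀] → ℂ be the arc-length parametrization of a smooth closed Jordan curve ℓ, so that there is a constant c₀ > 0 with |z(s) − z(σ)| ≥ c₀|s − σ| for all s, σ. If f is absolutely continuous on ℓ with derivative f′ ∈ L^p(ℓ) for some p > 1, then sup_{σ∈[0,s₀]} ∫₀^{s₀} |f(s) − f(σ)|/|z(s) − z(σ)| ds ≤ C · ‖f′‖_{L^p} for a constant C depending only on p, s₀, and c₀. -/

import Mathlib

open MeasureTheory Set intervalIntegral
open scoped Interval

set_option maxHeartbeats 1000000

theorem chord_arc_holder_estimate
    (p s₀ c₀ : ℝ) (hp : 1 < p) (hs₀ : 0 < s₀) (hc₀ : 0 < c₀) :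
    ∃ C : ℝ, ∀ (z : ℝ → ℂ) (f fd : ℝ → ℂ),
      Continuous z →
      (∀ s ∈ Icc (0:ℝ) s₀, ∀ σ ∈ Icc (0:ℝ) s₀, c₀ * |s - σ| ≤ ‖z s - z σ‖) →
      IntervalIntegrable fd volume 0 s₀ →
      IntervalIntegrable (fun x => ‖fd x‖ ^ p) volume 0 s₀ →
      (∀ s ∈ Icc (0:ℝ) s₀, ∀ σ ∈ Icc (0:ℝ) s₀,
        f s - f σ = ∫ x in σ..s, fd x) →
      ∀ σ ∈ Icc (0:ℝ) s₀,
        (∫ s in (0:ℝ)..s₀, ‖f s - f σ‖ / ‖z s - z σ‖) ≤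
          C * (∫ x in (0:ℝ)..s₀, ‖fd x‖ ^ p) ^ (1 / p) := by
  have hp0 : (0:ℝ) < p := lt_trans one_pos hp
  set r : ℝ := -(1/p) with hr_def
  have hp1 : (0:ℝ) < 1/p := by positivity
  have hp1' : 1/p < 1 := by rw [div_lt_one hp0]; exact hp
  have hr1 : (0:ℝ) < r + 1 := by rw [hr_def]; linarith
  have hr : (-1:ℝ) < r := by linarith
  set q := Real.conjExponent p with hq_def
  have hpq : p.HolderConjugate q := Real.HolderConjugate.conjExponent hp
  have hq : 1/q = 1 - 1/p := by
    have h := hpq.inv_add_inv_eq_one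
    rw [one_div, one_div]; linarith
  refine ⟨2 * s₀ ^ (r + 1) / (r + 1) / c₀, ?_⟩
  intro z f fd hz hchord hfd hfdp hf σ hσ
  obtain ⟨hσ0, hσs⟩ := hσ
  set M : ℝ := (∫ x in (0:ℝ)..s₀, ‖fd x‖ ^ p) ^ (1/p) with hM_def
  have hInt_nonneg : 0 ≤ ∫ x in (0:ℝ)..s₀, ‖fd x‖ ^ p :=
    intervalIntegral.integral_nonneg hs₀.le
      (fun u _ => Real.rpow_nonneg (norm_nonneg _) _)
  have hM0 : 0 ≤ M := Real.rpow_nonneg hInt_nonneg _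
  -- integrability on subintervals
  have hfdIoc : IntegrableOn fd (Ioc 0 s₀) volume := by
    have := intervalIntegrable_iff.mp hfd
    rwa [uIoc_of_le hs₀.le] at this
  have hfdpIoc : IntegrableOn (fun x => ‖fd x‖ ^ p) (Ioc 0 s₀) volume := by
    have := intervalIntegrable_iff.mp hfdp
    rwa [uIoc_of_le hs₀.le] at this
  -- Hölder estimate on subintervals
  have key : ∀ s ∈ Icc (0:ℝ) s₀,
      ‖∫ x in σ..s, fd x‖ ≤ M * |s - σ| ^ (1/q) := by
    intro s hs
    have hsub : Ι σ s ⊆ Ioc 0 s₀ := by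
      rw [uIoc]
      exact Ioc_subset_Ioc (le_min hσ0 hs.1) (max_le hσs hs.2)
    have hfd' : IntegrableOn fd (Ι σ s) volume := hfdIoc.mono_set hsub
    have hfdp' : IntegrableOn (fun x => ‖fd x‖ ^ p) (Ι σ s) volume :=
      hfdpIoc.mono_set hsub
    haveI : IsFiniteMeasure (volume.restrict (Ι σ s)) := by
      constructor
      rw [Measure.restrict_apply_univ, uIoc]
      exact measure_Ioc_lt_top
    have hmem : MemLp fd (ENNReal.ofReal p) (volume.restrict (Ι σ s)) := by
      rw [← memLp_norm_rpow_iff hfd'.aestronglyMeasurable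
        (ENNReal.ofReal_pos.mpr hp0).ne' ENNReal.ofReal_ne_top,
        ENNReal.toReal_ofReal hp0.le,
        ENNReal.div_self (ENNReal.ofReal_pos.mpr hp0).ne'
          ENNReal.ofReal_ne_top,
        memLp_one_iff_integrable]
      exact hfdp'
    have hvol : (volume (Ι σ s)).toReal = |s - σ| := by
      rw [uIoc, Real.volume_Ioc, ENNReal.toReal_ofReal (by
        rw [sub_nonneg]; exact min_le_max)]
      rw [max_sub_min_eq_abs, abs_sub_comm]
    have holder := integral_mul_norm_le_Lp_mul_Lq
      (μ := volume.restrict (Ι σ s)) (f := fd) (g := fun _ : ℝ => (1:ℝ))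
      hpq hmem (by exact memLp_const 1)
    calc ‖∫ x in σ..s, fd x‖
        ≤ ∫ x in Ι σ s, ‖fd x‖ := intervalIntegral.norm_integral_le_integral_norm_uIoc
      _ = ∫ x in Ι σ s, ‖fd x‖ * ‖(1:ℝ)‖ := by simp
      _ ≤ (∫ x in Ι σ s, ‖fd x‖ ^ p) ^ (1/p) *
          (∫ _x in Ι σ s, ‖(1:ℝ)‖ ^ q) ^ (1/q) := by simpa using holder
      _ ≤ M * |s - σ| ^ (1/q) := by
          have h1 : (∫ x in Ι σ s, ‖fd x‖ ^ p) ^ (1/p) ≤ M := by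
            apply Real.rpow_le_rpow
              (setIntegral_nonneg measurableSet_uIoc
                (fun u _ => Real.rpow_nonneg (norm_nonneg _) _))
            · calc (∫ x in Ι σ s, ‖fd x‖ ^ p)
                  ≤ ∫ x in Ioc 0 s₀, ‖fd x‖ ^ p := by
                    apply setIntegral_mono_set hfdpIoc
                    · exact Filter.Eventually.of_forall
                        (fun u => Real.rpow_nonneg (norm_nonneg _) _)
                    · exact HasSubset.Subset.eventuallyLE hsub
                _ = ∫ x in (0:ℝ)..s₀, ‖fd x‖ ^ p := by
                    rw [intervalIntegral.integral_of_le hs₀.le]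
            · exact hp1.le
          have h2 : (∫ _x in Ι σ s, ‖(1:ℝ)‖ ^ q) ^ (1/q) = |s - σ| ^ (1/q) := by
            rw [show (fun _x : ℝ => ‖(1:ℝ)‖ ^ q) = fun _x : ℝ => (1:ℝ) by
              funext x; simp, setIntegral_const, smul_eq_mul, mul_one, Measure.real, hvol]
          rw [h2]
          exact mul_le_mul_of_nonneg_right h1 (Real.rpow_nonneg (abs_nonneg _) _)
  -- pointwise bound
  have hpt : ∀ s ∈ Icc (0:ℝ) s₀,
      ‖f s - f σ‖ / ‖z s - z σ‖ ≤ (M / c₀) * |s - σ| ^ r := by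
    intro s hs
    rcases eq_or_ne s σ with h | h
    · subst h
      simp [Real.zero_rpow (by intro h0; rw [hr_def] at h0; nlinarith : r ≠ 0)]
    · have habs : 0 < |s - σ| := abs_pos.mpr (sub_ne_zero.mpr h)
      have hzpos : 0 < ‖z s - z σ‖ :=
        lt_of_lt_of_le (by positivity) (hchord s hs σ ⟨hσ0, hσs⟩)
      have h1 : ‖f s - f σ‖ ≤ M * |s - σ| ^ (1/q) := by
        rw [hf s hs σ ⟨hσ0, hσs⟩]; exact key s hs
      calc ‖f s - f σ‖ / ‖z s - z σ‖
          ≤ (M * |s - σ| ^ (1/q)) / (c₀ * |s - σ|) := by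
            apply div_le_div₀ (by positivity) h1 (by positivity)
              (hchord s hs σ ⟨hσ0, hσs⟩)
        _ = (M / c₀) * |s - σ| ^ r := by
            rw [show r = 1/q - 1 by rw [hq, hr_def]; ring,
              Real.rpow_sub habs, Real.rpow_one, mul_div_mul_comm]
  -- integrability of the bound
  have e1 : IntervalIntegrable (fun s => |s - σ| ^ r) volume 0 σ := by
    have h1 : IntervalIntegrable (fun s => (σ - s) ^ r) volume 0 σ := by
      have := (intervalIntegrable_rpow' hr (a := 0) (b := σ)).comp_sub_left σ
      simpa using this.symm
    rw [intervalIntegrable_iff] at h1 ⊢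
    apply h1.congr_fun ?_ measurableSet_uIoc
    intro x hx
    rw [uIoc_of_le hσ0] at hx
    show (σ - x) ^ r = |x - σ| ^ r
    rw [abs_of_nonpos (by linarith [hx.2] : x - σ ≤ 0), neg_sub]
  have e2 : IntervalIntegrable (fun s => |s - σ| ^ r) volume σ s₀ := by
    have h2 : IntervalIntegrable (fun s => (s - σ) ^ r) volume σ s₀ := by
      have := (intervalIntegrable_rpow' hr (a := 0) (b := s₀ - σ)).comp_sub_right σ
      simpa using this
    rw [intervalIntegrable_iff] at h2 ⊢
    apply h2.congr_fun ?_ measurableSet_uIoc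
    intro x hx
    rw [uIoc_of_le hσs] at hx
    show (x - σ) ^ r = |x - σ| ^ r
    rw [abs_of_nonneg (by linarith [hx.1] : (0:ℝ) ≤ x - σ)]
  have hib : IntervalIntegrable (fun s => |s - σ| ^ r) volume 0 s₀ := e1.trans e2
  have hibB : IntervalIntegrable (fun s => (M / c₀) * |s - σ| ^ r) volume 0 s₀ :=
    hib.const_mul _
  -- measurability / integrability of the integrand
  set G : ℝ → ℝ := fun s => ‖∫ x in σ..s, fd x‖ / ‖z s - z σ‖ with hG_def
  have hEq : EqOn (fun s => ‖f s - f σ‖ / ‖z s - z σ‖) G (Set.uIcc 0 s₀) := by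
    intro s hs
    rw [uIcc_of_le hs₀.le] at hs
    simp only [hG_def]
    rw [hf s hs σ ⟨hσ0, hσs⟩]
  have hGm : AEStronglyMeasurable G (volume.restrict (Ioc 0 s₀)) := by
    have c1 : ContinuousOn (fun s => ∫ x in σ..s, fd x) (Icc 0 s₀) := by
      have := continuousOn_primitive_interval' (b₁ := 0) (b₂ := s₀) hfd
        (by rw [uIcc_of_le hs₀.le]; exact ⟨hσ0, hσs⟩)
      rwa [uIcc_of_le hs₀.le] at this
    have c1' : AEStronglyMeasurable (fun s => ∫ x in σ..s, fd x)
        (volume.restrict (Ioc 0 s₀)) :=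
      (c1.mono Ioc_subset_Icc_self).aestronglyMeasurable measurableSet_Ioc
    rw [aestronglyMeasurable_iff_aemeasurable]
    exact AEMeasurable.div (c1'.norm.aemeasurable)
      ((hz.sub continuous_const).norm.measurable.aemeasurable)
  have hGint : IntervalIntegrable G volume 0 s₀ := by
    rw [intervalIntegrable_iff, uIoc_of_le hs₀.le]
    have hBint : IntegrableOn (fun s => (M / c₀) * |s - σ| ^ r) (Ioc 0 s₀) volume := by
      have := intervalIntegrable_iff.mp hibB
      rwa [uIoc_of_le hs₀.le] at this
    apply hBint.mono' hGm
    filter_upwards [ae_restrict_mem measurableSet_Ioc] with x hx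
    rw [Real.norm_of_nonneg (by positivity)]
    have h := hpt x (Ioc_subset_Icc_self hx)
    rwa [hf x (Ioc_subset_Icc_self hx) σ ⟨hσ0, hσs⟩] at h
  -- the integral of the bound
  have A1 : ∫ s in (0:ℝ)..σ, |s - σ| ^ r = σ ^ (r + 1) / (r + 1) := by
    rw [intervalIntegral.integral_congr (g := fun s => (σ - s) ^ r) (by
      intro x hx
      rw [uIcc_of_le hσ0] at hx
      simp only
      rw [abs_of_nonpos (by linarith [hx.2] : x - σ ≤ 0), neg_sub])]
    rw [intervalIntegral.integral_comp_sub_left (fun x => x ^ r) σ]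
    simp only [sub_self, sub_zero]
    rw [integral_rpow (Or.inl hr), Real.zero_rpow (ne_of_gt hr1), sub_zero]
  have A2 : ∫ s in σ..s₀, |s - σ| ^ r = (s₀ - σ) ^ (r + 1) / (r + 1) := by
    rw [intervalIntegral.integral_congr (g := fun s => (s - σ) ^ r) (by
      intro x hx
      rw [uIcc_of_le hσs] at hx
      simp only
      rw [abs_of_nonneg (by linarith [hx.1] : (0:ℝ) ≤ x - σ)])]
    rw [intervalIntegral.integral_comp_sub_right (fun x => x ^ r) σ]
    simp only [sub_self]
    rw [integral_rpow (Or.inl hr), Real.zero_rpow (ne_of_gt hr1), sub_zero]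
  have hIbound : ∫ s in (0:ℝ)..s₀, |s - σ| ^ r ≤ 2 * s₀ ^ (r + 1) / (r + 1) := by
    rw [← intervalIntegral.integral_add_adjacent_intervals e1 e2, A1, A2]
    have b1 : σ ^ (r + 1) ≤ s₀ ^ (r + 1) := Real.rpow_le_rpow hσ0 hσs hr1.le
    have b2 : (s₀ - σ) ^ (r + 1) ≤ s₀ ^ (r + 1) :=
      Real.rpow_le_rpow (by linarith) (by linarith) hr1.le
    rw [← add_div, div_le_div_iff₀ hr1 hr1]
    nlinarith
  -- put everything together
  calc (∫ s in (0:ℝ)..s₀, ‖f s - f σ‖ / ‖z s - z σ‖)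
      = ∫ s in (0:ℝ)..s₀, G s := intervalIntegral.integral_congr hEq
    _ ≤ ∫ s in (0:ℝ)..s₀, (M / c₀) * |s - σ| ^ r := by
        apply intervalIntegral.integral_mono_on hs₀.le hGint hibB
        intro x hx
        have h := hpt x hx
        rw [hf x hx σ ⟨hσ0, hσs⟩] at h
        exact h
    _ = (M / c₀) * ∫ s in (0:ℝ)..s₀, |s - σ| ^ r := by
        rw [intervalIntegral.integral_const_mul]
    _ ≤ (M / c₀) * (2 * s₀ ^ (r + 1) / (r + 1)) := by
        apply mul_le_mul_of_nonneg_left hIbound (by positivity)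
    _ = 2 * s₀ ^ (r + 1) / (r + 1) / c₀ * M := by ring
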